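/- At α = β = 1 (the critical symmetric point), the quartic f(λ) = λ⁴ + 3λ³ − (53/4)λ² − 51λ − 32 has largest real root exactly 4, equal to the local bound 2(1+α) = 4 of the symmetrically tilted CHSH inequality; hence no quantum violation is possible at α = β = 1. -/
import Mathlib


/-- at the critical symmetric point `α = β = 1`, the quartic
`f(λ) = λ⁴ + 3λ³ − (53/4)λ² − 51λ − 32` has largest real root exactly `4`,
equal to the local bound `2(1+α) = 4` of the symmetrically tilted CHSH
inequality; hence no quantum violation is possible at `α = β = 1`. -/
theorem critical_point_no_violation :
    IsGreatest {t : ℝ | t ^ 4 + 3 * t ^ 3 - (53 / 4) * t ^ 2 - 51 * t - 32 = 0}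
      (4 : ℝ) := by
  constructor
  · show (4:ℝ) ^ 4 + 3 * 4 ^ 3 - (53 / 4) * 4 ^ 2 - 51 * 4 - 32 = 0
    norm_num
  · intro t ht
    simp only [Set.mem_setOf_eq] at ht
    by_contra h
    push_neg at h
    have h4 : t - 4 > 0 := by linarith
    nlinarith [mul_pos h4 (by nlinarith : t ^ 3 + 7 * t ^ 2 + (59 / 4) * t + 8 > 0)]
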